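/- For a (p,q)-clan γ and a simple transposition s_i with s_i * γ > γ (i.e. ℓ(s_i*γ) > ℓ(γ)), one has v_{s_i*γ} = min(v_γ, v_γ s_i) in Bruhat order, where v_γ and v_{s_i*γ} are the associated p-inverse Grassmannian permutations. -/

import Mathlib

open scoped Classical
namespace ClanPaper

/-- A `(p,q)`-clan: a partial matching on `n = p+q` linearly ordered nodes,
given by the involution `m` (whose fixed points are the unmatched nodes),
with unmatched nodes signed `+` (`true`) or `-` (`false`), such that
`#(+) - #(-) = p - q`.  Signs at matched nodes are normalized to `false`. -/
structure Clan (p q : ℕ) where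
  m : Fin (p + q) → Fin (p + q)
  invol : ∀ i, m (m i) = i
  sign : Fin (p + q) → Bool
  signMatched : ∀ i, m i ≠ i → sign i = false
  balance :
    (Finset.univ.filter fun i => m i = i ∧ sign i = true).card + q =
      (Finset.univ.filter fun i => m i = i ∧ sign i = false).card + p

namespace Clan

variable {p q : ℕ}

/-- `Σ_{(i,j)-matchings, i<j} (j - i)` for the partial matching given by an
involution `m`. -/
noncomputable def arcSumAux {n : ℕ} (m : Fin n → Fin n) : ℕ :=
  ∑ i ∈ Finset.univ.filter (fun i => i < m i), ((m i : ℕ) - (i : ℕ))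

/-- The number of crossings: pairs of matchings `(i,j)`, `(k,l)` with
`i < k < j < l`. -/
noncomputable def crossingsAux {n : ℕ} (m : Fin n → Fin n) : ℕ :=
  (Finset.univ.filter fun x : Fin n × Fin n =>
    x.1 < m x.1 ∧ x.2 < m x.2 ∧ x.1 < x.2 ∧ x.2 < m x.1 ∧ m x.1 < m x.2).card

/-- `ℓ := Σ_{(i,j)-matchings} (j-i) - #crossings`, at the level of raw data. -/
noncomputable def lenAux {n : ℕ} (m : Fin n → Fin n) : ℤ :=
  (arcSumAux m : ℤ) - (crossingsAux m : ℤ)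

/-- The length `ℓ(γ)` of a clan. -/
noncomputable def len (γ : Clan p q) : ℤ := lenAux γ.m

/-- Node `i` is an unmatched `-` or a left endpoint of a matching
(these get the labels `1,…,q` in the definition of `u_γ`). -/
def IsMinusOrLeft (γ : Clan p q) (i : Fin (p + q)) : Prop :=
  (γ.m i = i ∧ γ.sign i = false) ∨ i < γ.m i

/-- Node `i` is an unmatched `+` or a left endpoint of a matching
(these get the labels `1,…,p` in the definition of `v_γ`). -/
def IsPlusOrLeft (γ : Clan p q) (i : Fin (p + q)) : Prop :=
  (γ.m i = i ∧ γ.sign i = true) ∨ i < γ.m i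

/-- `u_γ` as a `ℕ`-valued labelling (with values in `1,…,n`): the `-`s and the
left endpoints get the labels `1,…,q` from left to right, the `+`s and the
right endpoints get the labels `q+1,…,n` from left to right. -/
noncomputable def uFun (γ : Clan p q) (i : Fin (p + q)) : ℕ :=
  if γ.IsMinusOrLeft i then
    1 + (Finset.univ.filter fun j => γ.IsMinusOrLeft j ∧ j < i).card
  else
    q + 1 + (Finset.univ.filter fun j => ¬ γ.IsMinusOrLeft j ∧ j < i).card

/-- `v_γ` as a `ℕ`-valued labelling (with values in `1,…,n`): the `+`s and the
left endpoints get the labels `1,…,p` from left to right, the `-`s and the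
right endpoints get the labels `p+1,…,n` from left to right. -/
noncomputable def vFun (γ : Clan p q) (i : Fin (p + q)) : ℕ :=
  if γ.IsPlusOrLeft i then
    1 + (Finset.univ.filter fun j => γ.IsPlusOrLeft j ∧ j < i).card
  else
    p + 1 + (Finset.univ.filter fun j => ¬ γ.IsPlusOrLeft j ∧ j < i).card

/-- The transposition of `i` and `i'`, as a function. -/
def swapFun {n : ℕ} (i i' : Fin n) : Fin n → Fin n :=
  fun x => if x = i then i' else if x = i' then i else x

/-- Nodes `i`, `i'` are both unmatched and carry opposite signs. -/
def Opp (γ : Clan p q) (i i' : Fin (p + q)) : Prop :=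
  γ.m i = i ∧ γ.m i' = i' ∧ γ.sign i ≠ γ.sign i'

/-- `HeckeSpec γ i i' γ'` (for `i' = i+1`) says `γ' = s_i * γ` for the `0`-Hecke
action: if nodes `i`, `i'` carry opposite signs, they are replaced by a matching
between them; otherwise the two nodes are swapped if this increases the length,
and nothing happens if not. -/
def HeckeSpec (γ : Clan p q) (i i' : Fin (p + q)) (γ' : Clan p q) : Prop :=
  (γ.Opp i i' ∧
    (∀ x, γ'.m x = if x = i then i' else if x = i' then i else γ.m x) ∧
    (∀ x, γ'.sign x = if x = i ∨ x = i' then false else γ.sign x)) ∨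
  (¬ γ.Opp i i' ∧
    lenAux γ.m < lenAux (swapFun i i' ∘ γ.m ∘ swapFun i i') ∧
    (∀ x, γ'.m x = swapFun i i' (γ.m (swapFun i i' x))) ∧
    (∀ x, γ'.sign x = γ.sign (swapFun i i' x))) ∨
  (¬ γ.Opp i i' ∧
    ¬ lenAux γ.m < lenAux (swapFun i i' ∘ γ.m ∘ swapFun i i') ∧ γ' = γ)

end Clan
end ClanPaper

namespace ClanPaper
namespace Clan
open Finset

variable {n : ℕ}

lemma swapFun_val (i i' z : Fin n) :
    (swapFun i i' z : ℕ) = if z = i then (i' : ℕ) else if z = i' then (i : ℕ) else (z : ℕ) := by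
  unfold swapFun; split_ifs <;> rfl

lemma swapFun_invol (i i' z : Fin n) : swapFun i i' (swapFun i i' z) = z := by
  unfold swapFun
  split_ifs with h1 h2 h3 h4 h5 h6 <;> simp_all

lemma swapFun_left (i i' : Fin n) : swapFun i i' i = i' := by simp [swapFun]

lemma swapFun_right (i i' : Fin n) : swapFun i i' i' = i := by
  by_cases h : i' = i <;> simp [swapFun, h]

lemma swapFun_other {i i' z : Fin n} (h1 : z ≠ i) (h2 : z ≠ i') : swapFun i i' z = z := by
  simp [swapFun, h1, h2]

lemma swap_lt_swap {i i' : Fin n} (h : (i' : ℕ) = (i : ℕ) + 1) (u a : Fin n)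
    (h1 : ¬(u = i ∧ a = i')) (h2 : ¬(u = i' ∧ a = i)) :
    (swapFun i i' u < swapFun i i' a) ↔ u < a := by
  have hu := swapFun_val i i' u
  have ha := swapFun_val i i' a
  simp only [Fin.lt_def]
  rw [hu, ha]
  by_cases e1 : u = i <;> by_cases e2 : u = i' <;> by_cases e3 : a = i <;> by_cases e4 : a = i' <;>
    simp_all [Fin.ext_iff] <;> omega

lemma card_filter_lt_succ_pos {Q : Fin n → Prop} {i i' : Fin n}
    (h : (i' : ℕ) = (i : ℕ) + 1) (hQ : Q i) :
    (univ.filter fun k => Q k ∧ k < i').card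
      = (univ.filter fun k => Q k ∧ k < i).card + 1 := by
  have heq : (univ.filter fun k => Q k ∧ k < i')
      = insert i (univ.filter fun k => Q k ∧ k < i) := by
    ext k
    simp only [mem_filter, mem_univ, true_and, mem_insert, Fin.lt_def]
    constructor
    · rintro ⟨hk, hlt⟩
      by_cases hki : (k : ℕ) = (i : ℕ)
      · left; exact Fin.ext hki
      · right; exact ⟨hk, by omega⟩
    · rintro (rfl | ⟨hk, hlt⟩)
      · exact ⟨hQ, by omega⟩
      · exact ⟨hk, by omega⟩
  rw [heq, Finset.card_insert_of_notMem (by simp)]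

lemma card_filter_lt_succ_pos_not {Q : Fin n → Prop} {i i' : Fin n}
    (h : (i' : ℕ) = (i : ℕ) + 1) (hQ : ¬ Q i) :
    (univ.filter fun k => ¬ Q k ∧ k < i').card
      = (univ.filter fun k => ¬ Q k ∧ k < i).card + 1 := by
  have heq : (univ.filter fun k => ¬ Q k ∧ k < i')
      = insert i (univ.filter fun k => ¬ Q k ∧ k < i) := by
    ext k
    simp only [mem_filter, mem_univ, true_and, mem_insert, Fin.lt_def]
    constructor
    · rintro ⟨hk, hlt⟩
      by_cases hki : (k : ℕ) = (i : ℕ)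
      · left; exact Fin.ext hki
      · right; exact ⟨hk, by omega⟩
    · rintro (rfl | ⟨hk, hlt⟩)
      · exact ⟨hQ, by omega⟩
      · exact ⟨hk, by omega⟩
  rw [heq, Finset.card_insert_of_notMem (by simp)]

lemma card_filter_lt_succ_neg {Q : Fin n → Prop} {i i' : Fin n}
    (h : (i' : ℕ) = (i : ℕ) + 1) (hQ : ¬ Q i) :
    (univ.filter fun k => Q k ∧ k < i').card
      = (univ.filter fun k => Q k ∧ k < i).card := by
  congr 1
  ext k
  simp only [mem_filter, mem_univ, true_and, Fin.lt_def]
  constructor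
  · rintro ⟨hk, hlt⟩
    refine ⟨hk, ?_⟩
    by_cases hki : (k : ℕ) = (i : ℕ)
    · exact absurd (Fin.ext hki ▸ hk) hQ
    · omega
  · rintro ⟨hk, hlt⟩; exact ⟨hk, by omega⟩

lemma card_filter_lt_succ_neg_not {Q : Fin n → Prop} {i i' : Fin n}
    (h : (i' : ℕ) = (i : ℕ) + 1) (hQ : Q i) :
    (univ.filter fun k => ¬ Q k ∧ k < i').card
      = (univ.filter fun k => ¬ Q k ∧ k < i).card := by
  congr 1
  ext k
  simp only [mem_filter, mem_univ, true_and, Fin.lt_def]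
  constructor
  · rintro ⟨hk, hlt⟩
    refine ⟨hk, ?_⟩
    by_cases hki : (k : ℕ) = (i : ℕ)
    · exact absurd (Fin.ext hki ▸ hQ) hk
    · omega
  · rintro ⟨hk, hlt⟩; exact ⟨hk, by omega⟩

lemma card_filter_swap_pred (i i' : Fin n) (Q : Fin n → Prop) (j : Fin n) :
    (univ.filter fun z => Q (swapFun i i' z) ∧ swapFun i i' z < j).card
      = (univ.filter fun z => Q z ∧ z < j).card := by
  apply Finset.card_nbij' (i := fun z => swapFun i i' z) (j := fun z => swapFun i i' z)
  · intro a ha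
    simp only [mem_coe, mem_filter, mem_univ, true_and] at ha ⊢
    exact ha
  · intro a ha
    simp only [mem_coe, mem_filter, mem_univ, true_and] at ha ⊢
    rwa [swapFun_invol]
  · intro a _; exact swapFun_invol i i' a
  · intro a _; exact swapFun_invol i i' a

lemma card_filter_swap_pred_not (i i' : Fin n) (Q : Fin n → Prop) (j : Fin n) :
    (univ.filter fun z => ¬ Q (swapFun i i' z) ∧ swapFun i i' z < j).card
      = (univ.filter fun z => ¬ Q z ∧ z < j).card := by
  apply Finset.card_nbij' (i := fun z => swapFun i i' z) (j := fun z => swapFun i i' z)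
  · intro a ha
    simp only [mem_coe, mem_filter, mem_univ, true_and] at ha ⊢
    exact ha
  · intro a ha
    simp only [mem_coe, mem_filter, mem_univ, true_and] at ha ⊢
    rwa [swapFun_invol]
  · intro a _; exact swapFun_invol i i' a
  · intro a _; exact swapFun_invol i i' a

lemma one_add_card_le {Q : Fin n → Prop} {P : ℕ} (htot : (univ.filter Q).card = P)
    {j : Fin n} (hj : Q j) :
    1 + (univ.filter fun k => Q k ∧ k < j).card ≤ P := by
  have hsub : insert j (univ.filter fun k => Q k ∧ k < j) ⊆ univ.filter Q := by
    intro k hk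
    simp only [mem_insert, mem_filter, mem_univ, true_and] at hk ⊢
    rcases hk with rfl | ⟨hk, _⟩
    · exact hj
    · exact hk
  have := Finset.card_le_card hsub
  rw [Finset.card_insert_of_notMem (by simp)] at this
  omega

/-- Abstract version of `vFun` depending only on the `IsPlusOrLeft` predicate. -/
noncomputable def vOf (P : ℕ) {n : ℕ} (Q : Fin n → Prop) (j : Fin n) : ℕ :=
  if Q j then 1 + (univ.filter fun k => Q k ∧ k < j).card
  else P + 1 + (univ.filter fun k => ¬ Q k ∧ k < j).card

lemma vFun_eq_vOf {p q : ℕ} (γ : Clan p q) (j : Fin (p + q)) :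
    γ.vFun j = vOf p γ.IsPlusOrLeft j := rfl

lemma vOf_congr {P : ℕ} {Q Q' : Fin n → Prop} (h : ∀ k, Q' k ↔ Q k) (j : Fin n) :
    vOf P Q' j = vOf P Q j := by
  have : Q' = Q := funext fun k => propext (h k)
  rw [this]

lemma card_isPlusOrLeft {p q : ℕ} (γ : Clan p q) :
    (univ.filter γ.IsPlusOrLeft).card = p := by
  have hLR : (univ.filter fun x => x < γ.m x).card
      = (univ.filter fun x => γ.m x < x).card := by
    apply Finset.card_nbij' (i := fun x => γ.m x) (j := fun x => γ.m x)
    · intro a ha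
      simp only [mem_coe, mem_filter, mem_univ, true_and] at ha ⊢
      rw [γ.invol a]; exact ha
    · intro a ha
      simp only [mem_coe, mem_filter, mem_univ, true_and] at ha ⊢
      rw [γ.invol a]; exact ha
    · intro a _; exact γ.invol a
    · intro a _; exact γ.invol a
  have h1 : ((univ.filter fun x => γ.m x = x).filter fun x => γ.sign x = true).card
      + ((univ.filter fun x => γ.m x = x).filter fun x => ¬ γ.sign x = true).card
      = (univ.filter fun x => γ.m x = x).card :=
    Finset.card_filter_add_card_filter_not (fun x => γ.sign x = true)
  rw [Finset.filter_filter, Finset.filter_filter] at h1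
  have h2 : ((univ.filter fun x => ¬ γ.m x = x).filter fun x => x < γ.m x).card
      + ((univ.filter fun x => ¬ γ.m x = x).filter fun x => ¬ x < γ.m x).card
      = (univ.filter fun x => ¬ γ.m x = x).card :=
    Finset.card_filter_add_card_filter_not (fun x => x < γ.m x)
  rw [Finset.filter_filter, Finset.filter_filter] at h2
  have h3 : (univ.filter fun x => γ.m x = x).card
      + (univ.filter fun x => ¬ γ.m x = x).card = p + q := by
    rw [Finset.card_filter_add_card_filter_not (fun x => γ.m x = x)]
    simp
  have e1 : (univ.filter fun x => ¬ γ.m x = x ∧ x < γ.m x)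
      = (univ.filter fun x => x < γ.m x) := by
    apply Finset.filter_congr
    intro x _
    constructor
    · rintro ⟨_, h⟩; exact h
    · intro h; exact ⟨(ne_of_lt h).symm, h⟩
  have e2 : (univ.filter fun x => ¬ γ.m x = x ∧ ¬ x < γ.m x)
      = (univ.filter fun x => γ.m x < x) := by
    apply Finset.filter_congr
    intro x _
    constructor
    · rintro ⟨hne, hnl⟩; exact lt_of_le_of_ne (not_lt.mp hnl) hne
    · intro hx; exact ⟨ne_of_lt hx, not_lt.mpr (le_of_lt hx)⟩
  rw [e1, e2] at h2
  have h4 : ((univ.filter γ.IsPlusOrLeft).filter fun x => x < γ.m x).card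
      + ((univ.filter γ.IsPlusOrLeft).filter fun x => ¬ x < γ.m x).card
      = (univ.filter γ.IsPlusOrLeft).card :=
    Finset.card_filter_add_card_filter_not (fun x => x < γ.m x)
  rw [Finset.filter_filter, Finset.filter_filter] at h4
  have e3 : (univ.filter fun x => γ.IsPlusOrLeft x ∧ x < γ.m x)
      = (univ.filter fun x => x < γ.m x) := by
    apply Finset.filter_congr
    intro x _
    constructor
    · rintro ⟨_, h⟩; exact h
    · intro hx; exact ⟨Or.inr hx, hx⟩
  have e4 : (univ.filter fun x => γ.IsPlusOrLeft x ∧ ¬ x < γ.m x)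
      = (univ.filter fun x => γ.m x = x ∧ γ.sign x = true) := by
    apply Finset.filter_congr
    intro x _
    constructor
    · rintro ⟨hP, hnl⟩
      rcases hP with hfp | hl
      · exact hfp
      · exact absurd hl hnl
    · rintro ⟨hfix, hsgn⟩
      exact ⟨Or.inl ⟨hfix, hsgn⟩, by rw [hfix]; exact lt_irrefl x⟩
  rw [e3, e4] at h4
  have e5 : (univ.filter fun x => γ.m x = x ∧ ¬ γ.sign x = true)
      = (univ.filter fun x => γ.m x = x ∧ γ.sign x = false) := by
    apply Finset.filter_congr
    intro x _
    simp [Bool.not_eq_true]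
  rw [e5] at h1
  have hbal := γ.balance
  omega

lemma vOf_lt_vOf_pos {P : ℕ} {Q : Fin n → Prop} {i i' : Fin n} (h : (i' : ℕ) = (i : ℕ) + 1)
    (hQi : Q i) (hQi' : Q i') : vOf P Q i < vOf P Q i' := by
  rw [vOf, if_pos hQi, vOf, if_pos hQi', card_filter_lt_succ_pos h hQi]
  omega

lemma vOf_lt_vOf_neg {P : ℕ} {Q : Fin n → Prop} {i i' : Fin n} (h : (i' : ℕ) = (i : ℕ) + 1)
    (hQi : ¬ Q i) (hQi' : ¬ Q i') : vOf P Q i < vOf P Q i' := by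
  rw [vOf, if_neg hQi, vOf, if_neg hQi', card_filter_lt_succ_pos_not h hQi]
  omega

lemma vOf_le_P {P : ℕ} {Q : Fin n → Prop} (htot : (univ.filter Q).card = P)
    {j : Fin n} (hQj : Q j) : vOf P Q j ≤ P := by
  rw [vOf, if_pos hQj]
  exact one_add_card_le htot hQj

lemma P_lt_vOf {P : ℕ} {Q : Fin n → Prop} {j : Fin n} (hQj : ¬ Q j) : P < vOf P Q j := by
  rw [vOf, if_neg hQj]
  omega

lemma vOf_swap {P : ℕ} {Q Q' : Fin n → Prop} {i i' : Fin n} (h : (i' : ℕ) = (i : ℕ) + 1)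
    (hQi : ¬ Q i) (hQi' : Q i') (hQ'i : Q' i) (hQ'i' : ¬ Q' i')
    (hgen : ∀ k, k ≠ i → k ≠ i' → (Q' k ↔ Q k)) (j : Fin n) :
    vOf P Q' j = vOf P Q (swapFun i i' j) := by
  have hGlt : ∀ k : Fin n, k < i → (Q' k ↔ Q k) := by
    intro k hk
    have h1 : k ≠ i := ne_of_lt hk
    have h2 : k ≠ i' := by
      intro e
      rw [e, Fin.lt_def] at hk
      omega
    exact hgen k h1 h2
  have key1 : (univ.filter fun k => Q' k ∧ k < i) = (univ.filter fun k => Q k ∧ k < i) := by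
    apply Finset.filter_congr
    intro k _
    constructor
    · rintro ⟨hk, hlt⟩; exact ⟨(hGlt k hlt).mp hk, hlt⟩
    · rintro ⟨hk, hlt⟩; exact ⟨(hGlt k hlt).mpr hk, hlt⟩
  have key2 : (univ.filter fun k => ¬ Q' k ∧ k < i) = (univ.filter fun k => ¬ Q k ∧ k < i) := by
    apply Finset.filter_congr
    intro k _
    constructor
    · rintro ⟨hk, hlt⟩; exact ⟨fun hq => hk ((hGlt k hlt).mpr hq), hlt⟩
    · rintro ⟨hk, hlt⟩; exact ⟨fun hq => hk ((hGlt k hlt).mp hq), hlt⟩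
  by_cases hji : j = i
  · rw [hji, swapFun_left, vOf, if_pos hQ'i, vOf, if_pos hQi',
      card_filter_lt_succ_neg h hQi, key1]
  by_cases hji' : j = i'
  · rw [hji', swapFun_right, vOf, if_neg hQ'i', vOf, if_neg hQi,
      card_filter_lt_succ_neg_not h hQ'i, key2]
  · -- generic j
    have hjiv : (j : ℕ) ≠ (i : ℕ) := fun e => hji (Fin.ext e)
    have hji'v : (j : ℕ) ≠ (i' : ℕ) := fun e => hji' (Fin.ext e)
    have hK : ∀ k, Q' k ↔ Q (swapFun i i' k) := by
      intro k
      by_cases hk : k = i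
      · rw [hk, swapFun_left]; exact ⟨fun _ => hQi', fun _ => hQ'i⟩
      by_cases hk' : k = i'
      · rw [hk', swapFun_right]
        exact ⟨fun hx => absurd hx hQ'i', fun hx => absurd hx hQi⟩
      · rw [swapFun_other hk hk']; exact hgen k hk hk'
    have hltk : ∀ k : Fin n, swapFun i i' k < j ↔ k < j := by
      intro k
      rw [Fin.lt_def, Fin.lt_def, swapFun_val]
      split_ifs with e1 e2
      · have : (k : ℕ) = (i : ℕ) := congrArg Fin.val e1
        omega
      · have : (k : ℕ) = (i' : ℕ) := congrArg Fin.val e2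
        omega
      · exact Iff.rfl
    have hQjiff : Q' j ↔ Q j := hgen j hji hji'
    rw [swapFun_other hji hji', vOf, vOf]
    by_cases hQj : Q j
    · rw [if_pos (hQjiff.mpr hQj), if_pos hQj]
      congr 1
      have heq : (univ.filter fun k => Q' k ∧ k < j)
          = (univ.filter fun k => Q (swapFun i i' k) ∧ swapFun i i' k < j) := by
        apply Finset.filter_congr
        intro k _
        rw [hK k, hltk k]
      rw [heq, card_filter_swap_pred]
    · rw [if_neg (fun hx => hQj (hQjiff.mp hx)), if_neg hQj]
      congr 1
      have heq : (univ.filter fun k => ¬ Q' k ∧ k < j)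
          = (univ.filter fun k => ¬ Q (swapFun i i' k) ∧ swapFun i i' k < j) := by
        apply Finset.filter_congr
        intro k _
        rw [hK k, hltk k]
      rw [heq, card_filter_swap_pred_not]

end Clan
end ClanPaper

namespace ClanPaper
namespace Clan
open Finset

variable {n : ℕ}

lemma val_lt_of_lt {a b : Fin n} (h : a < b) : (a : ℕ) < (b : ℕ) := h

lemma fin_ne_of_val_ne {a b : Fin n} (h : (a : ℕ) ≠ (b : ℕ)) : a ≠ b :=
  fun e => h (congrArg Fin.val e)

lemma config_ne_a {m : Fin n → Fin n} {i i' : Fin n} (h : (i' : ℕ) = (i : ℕ) + 1)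
    (hi : m i = i ∨ i' < m i) : ∀ z : Fin n, ¬(z = i ∧ m z = i') := by
  rintro z ⟨hz, e⟩
  rw [hz] at e
  rcases hi with hfix | hlt
  · rw [hfix] at e; exact absurd (congrArg Fin.val e) (by omega)
  · rw [e, Fin.lt_def] at hlt; omega

lemma config_ne_b {m : Fin n → Fin n} {i i' : Fin n} (h : (i' : ℕ) = (i : ℕ) + 1)
    (hi' : m i' = i' ∨ m i' < i) : ∀ z : Fin n, ¬(z = i' ∧ m z = i) := by
  rintro z ⟨hz, e⟩
  rw [hz] at e
  rcases hi' with hfix | hlt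
  · rw [e] at hfix; exact absurd (congrArg Fin.val hfix) (by omega)
  · rw [e, Fin.lt_def] at hlt; omega

lemma stepA {m : Fin n → Fin n} (hm : ∀ x, m (m x) = x) {i i' : Fin n}
    (h : (i' : ℕ) = (i : ℕ) + 1) (hi : m i = i ∨ i' < m i) (hi' : m i' = i' ∨ m i' < i)
    {x y : Fin n}
    (c1 : x < m x) (c2 : y < m y) (c3 : x < y) (c4 : y < m x) (c5 : m x < m y)
    (hexc : ¬(y = i ∧ m x = i')) :
    swapFun i i' x < swapFun i i' (m x) ∧ swapFun i i' y < swapFun i i' (m y) ∧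
    swapFun i i' x < swapFun i i' y ∧ swapFun i i' y < swapFun i i' (m x) ∧
    swapFun i i' (m x) < swapFun i i' (m y) := by
  have hGa := config_ne_a h hi
  have hGb := config_ne_b h hi'
  have hpre : ∀ z : Fin n, m z = i → z = m i := fun z e => by rw [← e, hm z]
  refine ⟨(swap_lt_swap h _ _ (hGa x) (hGb x)).mpr c1,
    (swap_lt_swap h _ _ (hGa y) (hGb y)).mpr c2,
    (swap_lt_swap h _ _ ?_ ?_).mpr c3,
    (swap_lt_swap h _ _ hexc ?_).mpr c4,
    (swap_lt_swap h _ _ ?_ ?_).mpr c5⟩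
  · -- ¬(x = i ∧ y = i')
    rintro ⟨hx, hy⟩
    rw [hy] at c2
    rcases hi' with hfix | hlt
    · rw [hfix] at c2; exact absurd c2 (lt_irrefl _)
    · have h1 := val_lt_of_lt c2
      have h2 := val_lt_of_lt hlt
      omega
  · -- ¬(x = i' ∧ y = i)
    rintro ⟨hx, hy⟩
    rw [hx, hy] at c3
    exact absurd (val_lt_of_lt c3) (by omega)
  · -- ¬(y = i' ∧ m x = i)
    rintro ⟨hy, e⟩
    have hxmi := hpre x e
    rcases hi with hfix | hlt
    · rw [hfix] at hxmi
      rw [hxmi] at c1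
      rw [hfix] at c1
      exact absurd c1 (lt_irrefl _)
    · rw [← hxmi] at hlt
      rw [hy] at c3
      have h1 := val_lt_of_lt hlt
      have h2 := val_lt_of_lt c3
      omega
  · -- ¬(m x = i ∧ m y = i')
    rintro ⟨e1, _⟩
    have hxmi := hpre x e1
    rcases hi with hfix | hlt
    · rw [hfix] at hxmi
      rw [hxmi] at c1
      rw [hfix] at c1
      exact absurd c1 (lt_irrefl _)
    · rw [← hxmi] at hlt
      rw [e1] at c1
      have h1 := val_lt_of_lt hlt
      have h2 := val_lt_of_lt c1
      omega
  · -- ¬(m x = i' ∧ m y = i)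
    rintro ⟨e1, e2⟩
    have hymi := hpre y e2
    rcases hi with hfix | hlt
    · rw [hfix] at hymi
      rw [hymi] at c2
      rw [hfix] at c2
      exact absurd c2 (lt_irrefl _)
    · rw [← hymi] at hlt
      rw [e1] at c4
      have h1 := val_lt_of_lt hlt
      have h2 := val_lt_of_lt c4
      omega

lemma stepB {m : Fin n → Fin n} (hm : ∀ x, m (m x) = x) {i i' : Fin n}
    (h : (i' : ℕ) = (i : ℕ) + 1) (hi : m i = i ∨ i' < m i) (hi' : m i' = i' ∨ m i' < i)
    {x y : Fin n}
    (c1 : swapFun i i' x < swapFun i i' (m x)) (c2 : swapFun i i' y < swapFun i i' (m y))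
    (c3 : swapFun i i' x < swapFun i i' y) (c4 : swapFun i i' y < swapFun i i' (m x))
    (c5 : swapFun i i' (m x) < swapFun i i' (m y)) :
    x < m x ∧ y < m y ∧ x < y ∧ y < m x ∧ m x < m y := by
  have hGa := config_ne_a h hi
  have hGb := config_ne_b h hi'
  have hpre : ∀ z : Fin n, m z = i → z = m i := fun z e => by rw [← e, hm z]
  have hval : ∀ z w : Fin n, swapFun i i' z < swapFun i i' w → ¬(z = i' ∧ w = i) →
      ¬(z = i ∧ w = i') → z < w := fun z w hlt h1 h2 => (swap_lt_swap h z w h2 h1).mp hlt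
  have e3a : ¬(x = i ∧ y = i') := by
    rintro ⟨hx, hy⟩
    rw [hy] at c2
    rcases hi' with hfix | hlt
    · rw [hfix] at c2; exact absurd c2 (lt_irrefl _)
    · have hv := val_lt_of_lt hlt
      have hne1 : m i' ≠ i := fin_ne_of_val_ne (by omega)
      have hne2 : m i' ≠ i' := fin_ne_of_val_ne (by omega)
      rw [swapFun_right, swapFun_other hne1 hne2] at c2
      have := val_lt_of_lt c2
      omega
  have e3b : ¬(x = i' ∧ y = i) := by
    rintro ⟨hx, hy⟩
    rw [hy, hx] at c4
    rw [swapFun_left] at c4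
    rcases hi' with hfix | hlt
    · rw [hfix, swapFun_right] at c4
      exact absurd (val_lt_of_lt c4) (by omega)
    · have hv := val_lt_of_lt hlt
      have hne1 : m i' ≠ i := fin_ne_of_val_ne (by omega)
      have hne2 : m i' ≠ i' := fin_ne_of_val_ne (by omega)
      rw [swapFun_other hne1 hne2] at c4
      have := val_lt_of_lt c4
      omega
  have e4a : ¬(y = i ∧ m x = i') := by
    rintro ⟨hy, e⟩
    rw [hy, e, swapFun_left, swapFun_right] at c4
    exact absurd (val_lt_of_lt c4) (by omega)
  have e4b : ¬(y = i' ∧ m x = i) := by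
    rintro ⟨hy, e⟩
    have hxmi := hpre x e
    rcases hi with hfix | hlt
    · rw [hfix] at hxmi
      rw [hxmi] at c1
      rw [hfix] at c1
      exact absurd c1 (lt_irrefl _)
    · rw [← hxmi] at hlt
      have hv := val_lt_of_lt hlt
      have hne1 : x ≠ i := fin_ne_of_val_ne (by omega)
      have hne2 : x ≠ i' := fin_ne_of_val_ne (by omega)
      rw [hy, swapFun_other hne1 hne2, swapFun_right] at c3
      have := val_lt_of_lt c3
      omega
  have e5a : ¬(m x = i ∧ m y = i') := by
    rintro ⟨e1, _⟩
    have hxmi := hpre x e1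
    rcases hi with hfix | hlt
    · rw [hfix] at hxmi
      rw [hxmi] at c1
      rw [hfix] at c1
      exact absurd c1 (lt_irrefl _)
    · rw [← hxmi] at hlt
      have hv := val_lt_of_lt hlt
      have hne1 : x ≠ i := fin_ne_of_val_ne (by omega)
      have hne2 : x ≠ i' := fin_ne_of_val_ne (by omega)
      rw [swapFun_other hne1 hne2, e1, swapFun_left] at c1
      have := val_lt_of_lt c1
      omega
  have e5b : ¬(m x = i' ∧ m y = i) := by
    rintro ⟨e1, e2⟩
    have hymi := hpre y e2
    rcases hi with hfix | hlt
    · rw [hfix] at hymi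
      rw [hymi] at c2
      rw [hfix] at c2
      exact absurd c2 (lt_irrefl _)
    · rw [← hymi] at hlt
      have hv := val_lt_of_lt hlt
      have hne1 : y ≠ i := fin_ne_of_val_ne (by omega)
      have hne2 : y ≠ i' := fin_ne_of_val_ne (by omega)
      rw [swapFun_other hne1 hne2, e1, swapFun_right] at c4
      have := val_lt_of_lt c4
      omega
  exact ⟨hval x (m x) c1 (fun hh => hGb x hh) (fun hh => hGa x hh),
    hval y (m y) c2 (fun hh => hGb y hh) (fun hh => hGa y hh),
    hval x y c3 e3b e3a,
    hval y (m x) c4 e4b e4a,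
    hval (m x) (m y) c5 e5b e5a⟩

end Clan
end ClanPaper

namespace ClanPaper
namespace Clan
open Finset

variable {n : ℕ}

lemma swap_conj_fixed {m : Fin n → Fin n} (hm : ∀ x, m (m x) = x) {i i' : Fin n}
    (hfi : m i = i) (hfi' : m i' = i') :
    swapFun i i' ∘ m ∘ swapFun i i' = m := by
  funext x
  simp only [Function.comp_apply]
  by_cases hx : x = i
  · rw [hx, swapFun_left, hfi', swapFun_right, hfi]
  by_cases hx' : x = i'
  · rw [hx', swapFun_right, hfi, swapFun_left, hfi']
  · have hmx1 : m x ≠ i := fun e => hx (by rw [← hm x, e, hfi])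
    have hmx2 : m x ≠ i' := fun e => hx' (by rw [← hm x, e, hfi'])
    rw [swapFun_other hx hx', swapFun_other hmx1 hmx2]

lemma swap_conj_pair {m : Fin n → Fin n} (hm : ∀ x, m (m x) = x) {i i' : Fin n}
    (hpi : m i = i') :
    swapFun i i' ∘ m ∘ swapFun i i' = m := by
  have hpi' : m i' = i := by rw [← hpi, hm i]
  funext x
  simp only [Function.comp_apply]
  by_cases hx : x = i
  · rw [hx, swapFun_left, hpi', swapFun_left, hpi]
  by_cases hx' : x = i'
  · rw [hx', swapFun_right, hpi, swapFun_right, hpi']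
  · have hmx1 : m x ≠ i := fun e => hx' (by rw [← hm x, e, hpi])
    have hmx2 : m x ≠ i' := fun e => hx (by rw [← hm x, e, hpi'])
    rw [swapFun_other hx hx', swapFun_other hmx1 hmx2]

lemma lenAux_swap_le {m : Fin n → Fin n} (hm : ∀ x, m (m x) = x) {i i' : Fin n}
    (h : (i' : ℕ) = (i : ℕ) + 1)
    (hi : m i = i ∨ i' < m i) (hi' : m i' = i' ∨ m i' < i) :
    lenAux (swapFun i i' ∘ m ∘ swapFun i i') ≤ lenAux m := by
  have hms : ∀ z, (swapFun i i' ∘ m ∘ swapFun i i') z = swapFun i i' (m (swapFun i i' z)) :=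
    fun z => rfl
  rcases hi with hfi | hci <;> rcases hi' with hfi' | hdi'
  · -- case 1 : both fixed
    rw [swap_conj_fixed hm hfi hfi']
  · -- case 2 : i fixed, m i' < i
    have hvd := val_lt_of_lt hdi'
    have hdne1 : m i' ≠ i := fin_ne_of_val_ne (by omega)
    have hdne2 : m i' ≠ i' := fin_ne_of_val_ne (by omega)
    have hmd : m (m i') = i' := hm i'
    have hmsi : (swapFun i i' ∘ m ∘ swapFun i i') i = m i' := by
      rw [hms i, swapFun_left, swapFun_other hdne1 hdne2]
    have hmsi' : (swapFun i i' ∘ m ∘ swapFun i i') i' = i' := by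
      rw [hms i', swapFun_right, hfi, swapFun_left]
    have hmsd : (swapFun i i' ∘ m ∘ swapFun i i') (m i') = i := by
      rw [hms _, swapFun_other hdne1 hdne2, hmd, swapFun_right]
    have hgen : ∀ z, z ≠ i → z ≠ i' → z ≠ m i' →
        (swapFun i i' ∘ m ∘ swapFun i i') z = m z ∧ m z ≠ i ∧ m z ≠ i' ∧ m z ≠ m i' := by
      intro z h1 h2 h3
      have hz1 : m z ≠ i := fun e => h1 (by rw [← hm z, e, hfi])
      have hz2 : m z ≠ i' := fun e => h3 (by rw [← hm z, e])
      have hz3 : m z ≠ m i' := fun e => h2 (by rw [← hm z, e, hmd])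
      exact ⟨by rw [hms z, swapFun_other h1 h2, swapFun_other hz1 hz2], hz1, hz2, hz3⟩
    have keyN : ∀ z : Fin n,
        ((z : ℕ) = (i : ℕ) ∧ (m z : ℕ) = (i : ℕ)
          ∧ ((swapFun i i' ∘ m ∘ swapFun i i') z : ℕ) = (m i' : ℕ)) ∨
        ((z : ℕ) = (i' : ℕ) ∧ (m z : ℕ) = (m i' : ℕ)
          ∧ ((swapFun i i' ∘ m ∘ swapFun i i') z : ℕ) = (i' : ℕ)) ∨
        ((z : ℕ) = (m i' : ℕ) ∧ (m z : ℕ) = (i' : ℕ)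
          ∧ ((swapFun i i' ∘ m ∘ swapFun i i') z : ℕ) = (i : ℕ)) ∨
        ((z : ℕ) ≠ (i : ℕ) ∧ (z : ℕ) ≠ (i' : ℕ) ∧ (z : ℕ) ≠ (m i' : ℕ)
          ∧ ((swapFun i i' ∘ m ∘ swapFun i i') z : ℕ) = (m z : ℕ)
          ∧ (m z : ℕ) ≠ (i : ℕ) ∧ (m z : ℕ) ≠ (i' : ℕ) ∧ (m z : ℕ) ≠ (m i' : ℕ)) := by
      intro z
      by_cases h1 : z = i
      · exact Or.inl ⟨congrArg Fin.val h1,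
          by rw [h1, hfi], by rw [h1, hmsi]⟩
      by_cases h2 : z = i'
      · exact Or.inr (Or.inl ⟨congrArg Fin.val h2, by rw [h2], by rw [h2, hmsi']⟩)
      by_cases h3 : z = m i'
      · exact Or.inr (Or.inr (Or.inl ⟨congrArg Fin.val h3,
          by rw [h3, hmd], by rw [h3, hmsd]⟩))
      · obtain ⟨e0, e1, e2, e3⟩ := hgen z h1 h2 h3
        exact Or.inr (Or.inr (Or.inr ⟨fun e => h1 (Fin.ext e), fun e => h2 (Fin.ext e),
          fun e => h3 (Fin.ext e), congrArg Fin.val e0,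
          fun e => e1 (Fin.ext e), fun e => e2 (Fin.ext e), fun e => e3 (Fin.ext e)⟩))
    have harc : arcSumAux (swapFun i i' ∘ m ∘ swapFun i i') + 1 = arcSumAux m := by
      unfold arcSumAux
      have hset : (univ.filter fun z => z < (swapFun i i' ∘ m ∘ swapFun i i') z)
          = (univ.filter fun z => z < m z) := by
        ext z
        simp only [mem_filter, mem_univ, true_and, Fin.lt_def]
        have := keyN z
        omega
      rw [hset]
      have hdmem : m i' ∈ univ.filter fun z => z < m z := by
        simp only [mem_filter, mem_univ, true_and, hmd, Fin.lt_def]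
        omega
      rw [← Finset.add_sum_erase _ _ hdmem,
        ← Finset.add_sum_erase _ (fun z => ((m z : ℕ) - (z : ℕ))) hdmem]
      have hsum : ∑ z ∈ ((univ.filter fun z => z < m z).erase (m i')),
          (((swapFun i i' ∘ m ∘ swapFun i i') z : ℕ) - (z : ℕ))
          = ∑ z ∈ ((univ.filter fun z => z < m z).erase (m i')), ((m z : ℕ) - (z : ℕ)) := by
        apply Finset.sum_congr rfl
        intro z hz
        rw [Finset.mem_erase, Finset.mem_filter] at hz
        obtain ⟨hzd, _, hzlt⟩ := hz
        have hzd' : (z : ℕ) ≠ (m i' : ℕ) := fun e => hzd (Fin.ext e)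
        have hzlt' := val_lt_of_lt hzlt
        have := keyN z
        omega
      rw [hsum, hmsd, hmd]
      omega
    have hcross : crossingsAux (swapFun i i' ∘ m ∘ swapFun i i') = crossingsAux m := by
      unfold crossingsAux
      apply Finset.card_nbij' (i := fun z => (swapFun i i' z.1, swapFun i i' z.2))
        (j := fun z => (swapFun i i' z.1, swapFun i i' z.2))
      · rintro ⟨x, y⟩ hxy
        simp only [mem_coe, mem_filter, mem_univ, true_and, Function.comp_apply] at hxy ⊢
        obtain ⟨c1, c2, c3, c4, c5⟩ := hxy
        exact stepB hm h (Or.inl hfi) (Or.inr hdi')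
          (x := swapFun i i' x) (y := swapFun i i' y)
          (by rw [swapFun_invol]; exact c1) (by rw [swapFun_invol]; exact c2)
          (by rw [swapFun_invol, swapFun_invol]; exact c3)
          (by rw [swapFun_invol]; exact c4) c5
      · rintro ⟨x, y⟩ hxy
        simp only [mem_coe, mem_filter, mem_univ, true_and, Function.comp_apply] at hxy ⊢
        obtain ⟨c1, c2, c3, c4, c5⟩ := hxy
        rw [swapFun_invol, swapFun_invol]
        apply stepA hm h (Or.inl hfi) (Or.inr hdi') c1 c2 c3 c4 c5
        rintro ⟨hy, e⟩
        rw [e] at c5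
        rw [hy, hfi] at c5
        exact absurd (val_lt_of_lt c5) (by omega)
      · intro a _
        simp [swapFun_invol]
      · intro a _
        simp [swapFun_invol]
    unfold lenAux
    omega
  · -- case 3 : i' < m i, i' fixed
    have hvc := val_lt_of_lt hci
    have hcne1 : m i ≠ i := fin_ne_of_val_ne (by omega)
    have hcne2 : m i ≠ i' := fin_ne_of_val_ne (by omega)
    have hmc : m (m i) = i := hm i
    have hmsi : (swapFun i i' ∘ m ∘ swapFun i i') i = i := by
      rw [hms i, swapFun_left, hfi', swapFun_right]
    have hmsi' : (swapFun i i' ∘ m ∘ swapFun i i') i' = m i := by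
      rw [hms i', swapFun_right, swapFun_other hcne1 hcne2]
    have hmsc : (swapFun i i' ∘ m ∘ swapFun i i') (m i) = i' := by
      rw [hms _, swapFun_other hcne1 hcne2, hmc, swapFun_left]
    have hgen : ∀ z, z ≠ i → z ≠ i' → z ≠ m i →
        (swapFun i i' ∘ m ∘ swapFun i i') z = m z ∧ m z ≠ i ∧ m z ≠ i' ∧ m z ≠ m i := by
      intro z h1 h2 h3
      have hz1 : m z ≠ i := fun e => h3 (by rw [← hm z, e])
      have hz2 : m z ≠ i' := fun e => h2 (by rw [← hm z, e, hfi'])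
      have hz3 : m z ≠ m i := fun e => h1 (by rw [← hm z, e, hmc])
      exact ⟨by rw [hms z, swapFun_other h1 h2, swapFun_other hz1 hz2], hz1, hz2, hz3⟩
    have keyN : ∀ z : Fin n,
        ((z : ℕ) = (i : ℕ) ∧ (m z : ℕ) = (m i : ℕ)
          ∧ ((swapFun i i' ∘ m ∘ swapFun i i') z : ℕ) = (i : ℕ)) ∨
        ((z : ℕ) = (i' : ℕ) ∧ (m z : ℕ) = (i' : ℕ)
          ∧ ((swapFun i i' ∘ m ∘ swapFun i i') z : ℕ) = (m i : ℕ)) ∨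
        ((z : ℕ) = (m i : ℕ) ∧ (m z : ℕ) = (i : ℕ)
          ∧ ((swapFun i i' ∘ m ∘ swapFun i i') z : ℕ) = (i' : ℕ)) ∨
        ((z : ℕ) ≠ (i : ℕ) ∧ (z : ℕ) ≠ (i' : ℕ) ∧ (z : ℕ) ≠ (m i : ℕ)
          ∧ ((swapFun i i' ∘ m ∘ swapFun i i') z : ℕ) = (m z : ℕ)
          ∧ (m z : ℕ) ≠ (i : ℕ) ∧ (m z : ℕ) ≠ (i' : ℕ) ∧ (m z : ℕ) ≠ (m i : ℕ)) := by
      intro z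
      by_cases h1 : z = i
      · exact Or.inl ⟨congrArg Fin.val h1, by rw [h1], by rw [h1, hmsi]⟩
      by_cases h2 : z = i'
      · exact Or.inr (Or.inl ⟨congrArg Fin.val h2, by rw [h2, hfi'], by rw [h2, hmsi']⟩)
      by_cases h3 : z = m i
      · exact Or.inr (Or.inr (Or.inl ⟨congrArg Fin.val h3,
          by rw [h3, hmc], by rw [h3, hmsc]⟩))
      · obtain ⟨e0, e1, e2, e3⟩ := hgen z h1 h2 h3
        exact Or.inr (Or.inr (Or.inr ⟨fun e => h1 (Fin.ext e), fun e => h2 (Fin.ext e),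
          fun e => h3 (Fin.ext e), congrArg Fin.val e0,
          fun e => e1 (Fin.ext e), fun e => e2 (Fin.ext e), fun e => e3 (Fin.ext e)⟩))
    have harc : arcSumAux (swapFun i i' ∘ m ∘ swapFun i i') + 1 = arcSumAux m := by
      unfold arcSumAux
      have himem : i ∈ univ.filter fun z => z < m z := by
        simp only [mem_filter, mem_univ, true_and, Fin.lt_def]
        omega
      have hi'notmem : i' ∉ (univ.filter fun z => z < m z).erase i := by
        simp only [mem_erase, mem_filter, mem_univ, true_and, hfi']
        rintro ⟨_, hlt⟩
        exact absurd hlt (lt_irrefl _)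
      have hset : (univ.filter fun z => z < (swapFun i i' ∘ m ∘ swapFun i i') z)
          = insert i' ((univ.filter fun z => z < m z).erase i) := by
        ext z
        simp only [mem_filter, mem_univ, true_and, mem_insert, mem_erase, ne_eq,
          Fin.lt_def, Fin.ext_iff]
        have := keyN z
        omega
      rw [hset, Finset.sum_insert hi'notmem]
      have hsum : ∑ z ∈ ((univ.filter fun z => z < m z).erase i),
          (((swapFun i i' ∘ m ∘ swapFun i i') z : ℕ) - (z : ℕ))
          = ∑ z ∈ ((univ.filter fun z => z < m z).erase i), ((m z : ℕ) - (z : ℕ)) := by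
        apply Finset.sum_congr rfl
        intro z hz
        rw [Finset.mem_erase, Finset.mem_filter] at hz
        obtain ⟨hzi, _, hzlt⟩ := hz
        have hzi' : (z : ℕ) ≠ (i : ℕ) := fun e => hzi (Fin.ext e)
        have hzlt' := val_lt_of_lt hzlt
        have := keyN z
        omega
      rw [hsum, hmsi', ← Finset.add_sum_erase _ (fun z => ((m z : ℕ) - (z : ℕ))) himem]
      omega
    have hcross : crossingsAux (swapFun i i' ∘ m ∘ swapFun i i') = crossingsAux m := by
      unfold crossingsAux
      apply Finset.card_nbij' (i := fun z => (swapFun i i' z.1, swapFun i i' z.2))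
        (j := fun z => (swapFun i i' z.1, swapFun i i' z.2))
      · rintro ⟨x, y⟩ hxy
        simp only [mem_coe, mem_filter, mem_univ, true_and, Function.comp_apply] at hxy ⊢
        obtain ⟨c1, c2, c3, c4, c5⟩ := hxy
        exact stepB hm h (Or.inr hci) (Or.inl hfi')
          (x := swapFun i i' x) (y := swapFun i i' y)
          (by rw [swapFun_invol]; exact c1) (by rw [swapFun_invol]; exact c2)
          (by rw [swapFun_invol, swapFun_invol]; exact c3)
          (by rw [swapFun_invol]; exact c4) c5
      · rintro ⟨x, y⟩ hxy
        simp only [mem_coe, mem_filter, mem_univ, true_and, Function.comp_apply] at hxy ⊢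
        obtain ⟨c1, c2, c3, c4, c5⟩ := hxy
        rw [swapFun_invol, swapFun_invol]
        apply stepA hm h (Or.inr hci) (Or.inl hfi') c1 c2 c3 c4 c5
        rintro ⟨hy, e⟩
        have hx : x = i' := by rw [← hm x, e, hfi']
        rw [hx, hfi'] at c1
        exact absurd c1 (lt_irrefl _)
      · intro a _
        simp [swapFun_invol]
      · intro a _
        simp [swapFun_invol]
    unfold lenAux
    omega
  · -- case 4 : i' < m i, m i' < i
    have hvc := val_lt_of_lt hci
    have hvd := val_lt_of_lt hdi'
    have hcne1 : m i ≠ i := fin_ne_of_val_ne (by omega)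
    have hcne2 : m i ≠ i' := fin_ne_of_val_ne (by omega)
    have hdne1 : m i' ≠ i := fin_ne_of_val_ne (by omega)
    have hdne2 : m i' ≠ i' := fin_ne_of_val_ne (by omega)
    have hcd : (m i : ℕ) ≠ (m i' : ℕ) := by omega
    have hmc : m (m i) = i := hm i
    have hmd : m (m i') = i' := hm i'
    have hmsi : (swapFun i i' ∘ m ∘ swapFun i i') i = m i' := by
      rw [hms i, swapFun_left, swapFun_other hdne1 hdne2]
    have hmsi' : (swapFun i i' ∘ m ∘ swapFun i i') i' = m i := by
      rw [hms i', swapFun_right, swapFun_other hcne1 hcne2]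
    have hmsc : (swapFun i i' ∘ m ∘ swapFun i i') (m i) = i' := by
      rw [hms _, swapFun_other hcne1 hcne2, hmc, swapFun_left]
    have hmsd : (swapFun i i' ∘ m ∘ swapFun i i') (m i') = i := by
      rw [hms _, swapFun_other hdne1 hdne2, hmd, swapFun_right]
    have hgen : ∀ z, z ≠ i → z ≠ i' → z ≠ m i → z ≠ m i' →
        (swapFun i i' ∘ m ∘ swapFun i i') z = m z
          ∧ m z ≠ i ∧ m z ≠ i' ∧ m z ≠ m i ∧ m z ≠ m i' := by
      intro z h1 h2 h3 h4
      have hz1 : m z ≠ i := fun e => h3 (by rw [← hm z, e])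
      have hz2 : m z ≠ i' := fun e => h4 (by rw [← hm z, e])
      have hz3 : m z ≠ m i := fun e => h1 (by rw [← hm z, e, hmc])
      have hz4 : m z ≠ m i' := fun e => h2 (by rw [← hm z, e, hmd])
      exact ⟨by rw [hms z, swapFun_other h1 h2, swapFun_other hz1 hz2], hz1, hz2, hz3, hz4⟩
    have keyN : ∀ z : Fin n,
        ((z : ℕ) = (i : ℕ) ∧ (m z : ℕ) = (m i : ℕ)
          ∧ ((swapFun i i' ∘ m ∘ swapFun i i') z : ℕ) = (m i' : ℕ)) ∨
        ((z : ℕ) = (i' : ℕ) ∧ (m z : ℕ) = (m i' : ℕ)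
          ∧ ((swapFun i i' ∘ m ∘ swapFun i i') z : ℕ) = (m i : ℕ)) ∨
        ((z : ℕ) = (m i : ℕ) ∧ (m z : ℕ) = (i : ℕ)
          ∧ ((swapFun i i' ∘ m ∘ swapFun i i') z : ℕ) = (i' : ℕ)) ∨
        ((z : ℕ) = (m i' : ℕ) ∧ (m z : ℕ) = (i' : ℕ)
          ∧ ((swapFun i i' ∘ m ∘ swapFun i i') z : ℕ) = (i : ℕ)) ∨
        ((z : ℕ) ≠ (i : ℕ) ∧ (z : ℕ) ≠ (i' : ℕ) ∧ (z : ℕ) ≠ (m i : ℕ) ∧ (z : ℕ) ≠ (m i' : ℕ)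
          ∧ ((swapFun i i' ∘ m ∘ swapFun i i') z : ℕ) = (m z : ℕ)
          ∧ (m z : ℕ) ≠ (i : ℕ) ∧ (m z : ℕ) ≠ (i' : ℕ)
          ∧ (m z : ℕ) ≠ (m i : ℕ) ∧ (m z : ℕ) ≠ (m i' : ℕ)) := by
      intro z
      by_cases h1 : z = i
      · exact Or.inl ⟨congrArg Fin.val h1, by rw [h1], by rw [h1, hmsi]⟩
      by_cases h2 : z = i'
      · exact Or.inr (Or.inl ⟨congrArg Fin.val h2, by rw [h2], by rw [h2, hmsi']⟩)
      by_cases h3 : z = m i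
      · exact Or.inr (Or.inr (Or.inl ⟨congrArg Fin.val h3,
          by rw [h3, hmc], by rw [h3, hmsc]⟩))
      by_cases h4 : z = m i'
      · exact Or.inr (Or.inr (Or.inr (Or.inl ⟨congrArg Fin.val h4,
          by rw [h4, hmd], by rw [h4, hmsd]⟩)))
      · obtain ⟨e0, e1, e2, e3, e4⟩ := hgen z h1 h2 h3 h4
        exact Or.inr (Or.inr (Or.inr (Or.inr ⟨fun e => h1 (Fin.ext e),
          fun e => h2 (Fin.ext e), fun e => h3 (Fin.ext e), fun e => h4 (Fin.ext e),
          congrArg Fin.val e0, fun e => e1 (Fin.ext e), fun e => e2 (Fin.ext e),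
          fun e => e3 (Fin.ext e), fun e => e4 (Fin.ext e)⟩)))
    have harc : arcSumAux (swapFun i i' ∘ m ∘ swapFun i i') + 2 = arcSumAux m := by
      unfold arcSumAux
      have himem : i ∈ univ.filter fun z => z < m z := by
        simp only [mem_filter, mem_univ, true_and, Fin.lt_def]
        omega
      have hi'notmem : i' ∉ (univ.filter fun z => z < m z).erase i := by
        simp only [mem_erase, mem_filter, mem_univ, true_and, Fin.lt_def]
        rintro ⟨_, hlt⟩
        omega
      have hdmem : m i' ∈ (univ.filter fun z => z < m z).erase i := by
        simp only [mem_erase, mem_filter, mem_univ, true_and, Fin.lt_def, ne_eq, Fin.ext_iff]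
        rw [hmd]
        omega
      have hset : (univ.filter fun z => z < (swapFun i i' ∘ m ∘ swapFun i i') z)
          = insert i' ((univ.filter fun z => z < m z).erase i) := by
        ext z
        simp only [mem_filter, mem_univ, true_and, mem_insert, mem_erase, ne_eq,
          Fin.lt_def, Fin.ext_iff]
        have := keyN z
        omega
      rw [hset, Finset.sum_insert hi'notmem,
        ← Finset.add_sum_erase _ (fun z => (((swapFun i i' ∘ m ∘ swapFun i i') z : ℕ) - (z : ℕ))) hdmem]
      have hsum : ∑ z ∈ (((univ.filter fun z => z < m z).erase i).erase (m i')),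
          (((swapFun i i' ∘ m ∘ swapFun i i') z : ℕ) - (z : ℕ))
          = ∑ z ∈ (((univ.filter fun z => z < m z).erase i).erase (m i')),
            ((m z : ℕ) - (z : ℕ)) := by
        apply Finset.sum_congr rfl
        intro z hz
        rw [Finset.mem_erase, Finset.mem_erase, Finset.mem_filter] at hz
        obtain ⟨hzd, hzi, _, hzlt⟩ := hz
        have hzd' : (z : ℕ) ≠ (m i' : ℕ) := fun e => hzd (Fin.ext e)
        have hzi' : (z : ℕ) ≠ (i : ℕ) := fun e => hzi (Fin.ext e)
        have hzlt' := val_lt_of_lt hzlt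
        have := keyN z
        omega
      rw [hsum, hmsi', hmsd,
        ← Finset.add_sum_erase _ (fun z => ((m z : ℕ) - (z : ℕ))) himem,
        ← Finset.add_sum_erase _ (fun z => ((m z : ℕ) - (z : ℕ))) hdmem]
      rw [hmd]
      omega
    have hcross : crossingsAux (swapFun i i' ∘ m ∘ swapFun i i') + 1 = crossingsAux m := by
      have hmem : ((m i', i) : Fin n × Fin n) ∈ (univ.filter fun x : Fin n × Fin n =>
          x.1 < m x.1 ∧ x.2 < m x.2 ∧ x.1 < x.2 ∧ x.2 < m x.1 ∧ m x.1 < m x.2) := by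
        refine Finset.mem_filter.mpr ⟨Finset.mem_univ _, ?_, ?_, ?_, ?_, ?_⟩
        · show m i' < m (m i')
          rw [hmd]
          exact Fin.lt_def.mpr (by omega)
        · show i < m i
          exact Fin.lt_def.mpr (by omega)
        · exact hdi'
        · show i < m (m i')
          rw [hmd]
          exact Fin.lt_def.mpr (by omega)
        · show m (m i') < m i
          rw [hmd]
          exact hci
      have hb : crossingsAux (swapFun i i' ∘ m ∘ swapFun i i')
          = (((univ.filter fun x : Fin n × Fin n =>
            x.1 < m x.1 ∧ x.2 < m x.2 ∧ x.1 < x.2 ∧ x.2 < m x.1 ∧ m x.1 < m x.2)).erase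
              ((m i', i) : Fin n × Fin n)).card := by
        unfold crossingsAux
        apply Finset.card_nbij' (i := fun z => (swapFun i i' z.1, swapFun i i' z.2))
          (j := fun z => (swapFun i i' z.1, swapFun i i' z.2))
        · rintro ⟨x, y⟩ hxy
          simp only [mem_coe, mem_filter, mem_univ, true_and, Function.comp_apply] at hxy
          obtain ⟨c1, c2, c3, c4, c5⟩ := hxy
          rw [Finset.mem_coe, Finset.mem_erase]
          constructor
          · intro e
            have e1 : swapFun i i' x = m i' := congrArg Prod.fst e
            have e2 : swapFun i i' y = i := congrArg Prod.snd e
            have hx : x = m i' := by rw [← swapFun_invol i i' x, e1, swapFun_other hdne1 hdne2]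
            have hy : y = i' := by rw [← swapFun_invol i i' y, e2, swapFun_left]
            rw [hx, hy, swapFun_other hdne1 hdne2, hmd, swapFun_right] at c4
            exact absurd (val_lt_of_lt c4) (by omega)
          · simp only [mem_filter, mem_univ, true_and]
            exact stepB hm h (Or.inr hci) (Or.inr hdi')
              (x := swapFun i i' x) (y := swapFun i i' y)
              (by rw [swapFun_invol]; exact c1) (by rw [swapFun_invol]; exact c2)
              (by rw [swapFun_invol, swapFun_invol]; exact c3)
              (by rw [swapFun_invol]; exact c4) c5
        · rintro ⟨x, y⟩ hxy
          rw [Finset.mem_coe, Finset.mem_erase] at hxy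
          obtain ⟨hne, hxy⟩ := hxy
          simp only [mem_coe, mem_filter, mem_univ, true_and] at hxy ⊢
          obtain ⟨c1, c2, c3, c4, c5⟩ := hxy
          simp only [Function.comp_apply]
          rw [swapFun_invol, swapFun_invol]
          apply stepA hm h (Or.inr hci) (Or.inr hdi') c1 c2 c3 c4 c5
          rintro ⟨hy, e⟩
          have hx : x = m i' := by rw [← hm x, e]
          exact hne (by rw [hx, hy])
        · intro a _
          simp [swapFun_invol]
        · intro a _
          simp [swapFun_invol]
      have hc1 := Finset.card_erase_of_mem hmem
      have hpos := Finset.card_pos.mpr ⟨_, hmem⟩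
      have hcm : crossingsAux m = ((univ.filter fun x : Fin n × Fin n =>
          x.1 < m x.1 ∧ x.2 < m x.2 ∧ x.1 < x.2 ∧ x.2 < m x.1 ∧ m x.1 < m x.2)).card := rfl
      omega
    unfold lenAux
    omega

end Clan
end ClanPaper

open ClanPaper in
/-- If `s_i * γ > γ` then `v_{s_i * γ} = min(v_γ, v_γ s_i)` in
Bruhat order.  Since `v_γ` and `v_γ s_i` differ by a simple transposition on
the right, the Bruhat-smaller of the two is `v_γ` itself when
`v_γ(i) < v_γ(i+1)`, and `v_γ ∘ s_i` otherwise; the conclusion is stated in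
this explicit form. -/
theorem vFun_hecke_min {p q : ℕ} (γ γ' : Clan p q) (i i' : Fin (p + q))
    (h : (i' : ℕ) = (i : ℕ) + 1) (hs : Clan.HeckeSpec γ i i' γ')
    (hlt : γ.len < γ'.len) :
    ∀ j : Fin (p + q), γ'.vFun j =
      if γ.vFun i < γ.vFun i' then γ.vFun j
      else γ.vFun (Clan.swapFun i i' j) := by
  intro j
  have hne : i ≠ i' := Clan.fin_ne_of_val_ne (by omega)
  have htot := Clan.card_isPlusOrLeft γ
  rcases hs with ⟨hopp, hm, hsig⟩ | ⟨hnopp, hlen, hm, hsig⟩ | ⟨hnopp, hnlen, hγ⟩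
  · -- Case A : opposite signs, new matching (i, i')
    obtain ⟨hfi, hfi', hsgn⟩ := hopp
    have hmγi : γ'.m i = i' := by rw [hm i, if_pos rfl]
    have hmγi' : γ'.m i' = i := by rw [hm i', if_neg (Ne.symm hne), if_pos rfl]
    have hP'i : γ'.IsPlusOrLeft i := Or.inr (by rw [hmγi]; exact Fin.lt_def.mpr (by omega))
    have hP'i'false : ¬ γ'.IsPlusOrLeft i' := by
      rintro (⟨e, _⟩ | hlt2)
      · rw [hmγi'] at e; exact hne e
      · rw [hmγi'] at hlt2; exact absurd (Clan.val_lt_of_lt hlt2) (by omega)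
    have hgenP : ∀ k, k ≠ i → k ≠ i' → (γ'.IsPlusOrLeft k ↔ γ.IsPlusOrLeft k) := by
      intro k h1 h2
      have hmk : γ'.m k = γ.m k := by rw [hm k, if_neg h1, if_neg h2]
      have hsk : γ'.sign k = γ.sign k := by
        rw [hsig k, if_neg (by rintro (e | e); exacts [h1 e, h2 e])]
      unfold Clan.IsPlusOrLeft
      rw [hmk, hsk]
    cases hsi : γ.sign i with
    | false =>
      -- sign i = false, sign i' = true
      have hsi' : γ.sign i' = true := by
        cases e : γ.sign i' with
        | false => exact absurd (hsi.trans e.symm) hsgn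
        | true => rfl
      have hPifalse : ¬ γ.IsPlusOrLeft i := by
        rintro (⟨_, e⟩ | hlt2)
        · rw [hsi] at e; exact Bool.false_ne_true e
        · rw [hfi] at hlt2; exact absurd hlt2 (lt_irrefl _)
      have hPi' : γ.IsPlusOrLeft i' := Or.inl ⟨hfi', hsi'⟩
      have hbr : ¬ (γ.vFun i < γ.vFun i') := by
        rw [Clan.vFun_eq_vOf, Clan.vFun_eq_vOf]
        have h1 := Clan.vOf_le_P htot hPi'
        have h2 := Clan.P_lt_vOf (P := p) hPifalse
        omega
      rw [if_neg hbr, Clan.vFun_eq_vOf, Clan.vFun_eq_vOf]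
      exact Clan.vOf_swap h hPifalse hPi' hP'i hP'i'false hgenP j
    | true =>
      -- sign i = true, sign i' = false
      have hsi' : γ.sign i' = false := by
        cases e : γ.sign i' with
        | false => rfl
        | true => exact absurd (hsi.trans e.symm) hsgn
      have hPi : γ.IsPlusOrLeft i := Or.inl ⟨hfi, hsi⟩
      have hPi'false : ¬ γ.IsPlusOrLeft i' := by
        rintro (⟨_, e⟩ | hlt2)
        · rw [hsi'] at e; exact Bool.false_ne_true e
        · rw [hfi'] at hlt2; exact absurd hlt2 (lt_irrefl _)
      have hall : ∀ k, γ'.IsPlusOrLeft k ↔ γ.IsPlusOrLeft k := by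
        intro k
        by_cases hk : k = i
        · rw [hk]; exact ⟨fun _ => hPi, fun _ => hP'i⟩
        by_cases hk' : k = i'
        · rw [hk']
          exact ⟨fun hx => absurd hx hP'i'false, fun hx => absurd hx hPi'false⟩
        · exact hgenP k hk hk'
      have hbr : γ.vFun i < γ.vFun i' := by
        rw [Clan.vFun_eq_vOf, Clan.vFun_eq_vOf]
        have h1 := Clan.vOf_le_P htot hPi
        have h2 := Clan.P_lt_vOf (P := p) hPi'false
        omega
      rw [if_pos hbr, Clan.vFun_eq_vOf, Clan.vFun_eq_vOf]
      exact Clan.vOf_congr hall j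
  · -- Case B : swap of the two nodes
    by_cases hpair : γ.m i = i'
    · rw [Clan.swap_conj_pair γ.invol hpair] at hlen
      exact absurd hlen (lt_irrefl _)
    have hpair' : γ.m i' ≠ i := fun e => hpair (by rw [← γ.invol i', e])
    have hK : ∀ x, γ'.IsPlusOrLeft x ↔ γ.IsPlusOrLeft (Clan.swapFun i i' x) := by
      intro x
      unfold Clan.IsPlusOrLeft
      rw [hm x, hsig x]
      have hiff : (x < Clan.swapFun i i' (γ.m (Clan.swapFun i i' x)))
          ↔ (Clan.swapFun i i' x < γ.m (Clan.swapFun i i' x)) := by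
        have h2 := Clan.swap_lt_swap h (Clan.swapFun i i' x) (γ.m (Clan.swapFun i i' x))
          (fun he => hpair (by rw [← he.1]; exact he.2))
          (fun he => hpair' (by rw [← he.1]; exact he.2))
        rwa [Clan.swapFun_invol] at h2
      have hfixiff : (Clan.swapFun i i' (γ.m (Clan.swapFun i i' x)) = x)
          ↔ (γ.m (Clan.swapFun i i' x) = Clan.swapFun i i' x) := by
        constructor
        · intro e
          have h2 := congrArg (Clan.swapFun i i') e
          rwa [Clan.swapFun_invol] at h2
        · intro e
          rw [e, Clan.swapFun_invol]
      rw [hfixiff, hiff]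
    have hKi := hK i
    rw [Clan.swapFun_left] at hKi
    have hKi' := hK i'
    rw [Clan.swapFun_right] at hKi'
    by_cases hPi : γ.IsPlusOrLeft i <;> by_cases hPi' : γ.IsPlusOrLeft i'
    · -- both plus-or-left
      have hall : ∀ k, γ'.IsPlusOrLeft k ↔ γ.IsPlusOrLeft k := by
        intro k
        by_cases hk : k = i
        · rw [hk]; exact ⟨fun _ => hPi, fun _ => hKi.mpr hPi'⟩
        by_cases hk' : k = i'
        · rw [hk']; exact ⟨fun _ => hPi', fun _ => hKi'.mpr hPi⟩
        · have h2 := hK k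
          rw [Clan.swapFun_other hk hk'] at h2
          exact h2
      have hbr : γ.vFun i < γ.vFun i' := by
        rw [Clan.vFun_eq_vOf, Clan.vFun_eq_vOf]
        exact Clan.vOf_lt_vOf_pos h hPi hPi'
      rw [if_pos hbr, Clan.vFun_eq_vOf, Clan.vFun_eq_vOf]
      exact Clan.vOf_congr hall j
    · -- i plus-or-left, i' not : impossible (length would decrease)
      exfalso
      have hia : γ.m i = i ∨ i' < γ.m i := by
        rcases hPi with ⟨e, _⟩ | hlt2
        · exact Or.inl e
        · refine Or.inr (Fin.lt_def.mpr ?_)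
          have h1 := Clan.val_lt_of_lt hlt2
          have h2 : (γ.m i : ℕ) ≠ (i' : ℕ) := fun e => hpair (Fin.ext e)
          omega
      have hib : γ.m i' = i' ∨ γ.m i' < i := by
        by_cases e : γ.m i' = i'
        · exact Or.inl e
        · refine Or.inr (Fin.lt_def.mpr ?_)
          have h1 : ¬ i' < γ.m i' := fun hlt2 => hPi' (Or.inr hlt2)
          rw [Fin.lt_def] at h1
          have h2 : (γ.m i' : ℕ) ≠ (i' : ℕ) := fun e2 => e (Fin.ext e2)
          have h3 : (γ.m i' : ℕ) ≠ (i : ℕ) := fun e2 => hpair' (Fin.ext e2)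
          omega
      exact absurd hlen (not_lt.mpr (Clan.lenAux_swap_le γ.invol h hia hib))
    · -- i not, i' plus-or-left : the swap case
      have hP'i : γ'.IsPlusOrLeft i := hKi.mpr hPi'
      have hP'i'false : ¬ γ'.IsPlusOrLeft i' := fun hx => hPi (hKi'.mp hx)
      have hgenP : ∀ k, k ≠ i → k ≠ i' → (γ'.IsPlusOrLeft k ↔ γ.IsPlusOrLeft k) := by
        intro k h1 h2
        have h3 := hK k
        rw [Clan.swapFun_other h1 h2] at h3
        exact h3
      have hbr : ¬ (γ.vFun i < γ.vFun i') := by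
        rw [Clan.vFun_eq_vOf, Clan.vFun_eq_vOf]
        have h1 := Clan.vOf_le_P htot hPi'
        have h2 := Clan.P_lt_vOf (P := p) hPi
        omega
      rw [if_neg hbr, Clan.vFun_eq_vOf, Clan.vFun_eq_vOf]
      exact Clan.vOf_swap h hPi hPi' hP'i hP'i'false hgenP j
    · -- neither
      have hall : ∀ k, γ'.IsPlusOrLeft k ↔ γ.IsPlusOrLeft k := by
        intro k
        by_cases hk : k = i
        · rw [hk]; exact ⟨fun hx => absurd (hKi.mp hx) hPi', fun hx => absurd hx hPi⟩
        by_cases hk' : k = i'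
        · rw [hk']; exact ⟨fun hx => absurd (hKi'.mp hx) hPi, fun hx => absurd hx hPi'⟩
        · have h2 := hK k
          rw [Clan.swapFun_other hk hk'] at h2
          exact h2
      have hbr : γ.vFun i < γ.vFun i' := by
        rw [Clan.vFun_eq_vOf, Clan.vFun_eq_vOf]
        exact Clan.vOf_lt_vOf_neg h hPi hPi'
      rw [if_pos hbr, Clan.vFun_eq_vOf, Clan.vFun_eq_vOf]
      exact Clan.vOf_congr hall j
  · -- Case C : nothing happens, contradiction with the length increase
    exfalso
    rw [hγ] at hlt
    exact absurd hlt (lt_irrefl _)
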